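/- Let (A_1, B_1), …, (A_N, B_N) be pairs of real numbers with 0 ≤ A_i ≤ C and 0 ≤ B_i ≤ C, C > 0, and define the population parameters μ_A = (1/N)·Σ A_i, μ_B = (1/N)·Σ B_i, ν_A = (1/N)·Σ A_i², ν_B = (1/N)·Σ B_i², ν_{A,B} = (1/N)·Σ A_i·B_i. Sample n pairs uniformly at random without replacement, yielding (a_1,b_1),…,(a_n,b_n), and define the sample analogues μ_a, μ_b, ν_a, ν_b, ν_{a,b}. Let 0 < α < 1, t = √( ln(10/α)·C²/(2n) ), and t' = √( ln(10/α)·C⁴/(2n) ). Then with probability at least 1 − α, all five bounds hold simultaneously: |μ_A − μ_a| ≤ t, |μ_B − μ_b| ≤ t, |ν_A − ν_a| ≤ t', |ν_B − ν_b| ≤ t', and |ν_{A,B} − ν_{a,b}| ≤ t'. -/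

import Mathlib

open scoped Classical

noncomputable def hoeffD (p w : ℝ) : ℝ := 1 - p + p * Real.exp w
noncomputable def hoeffG (p w : ℝ) : ℝ := Real.log (hoeffD p w) - p * w - w ^ 2 / 8
noncomputable def hoeffGd (p w : ℝ) : ℝ := p * Real.exp w / hoeffD p w - p - w / 4

lemma hoeffD_pos {p : ℝ} (hp0 : 0 ≤ p) (hp1 : p ≤ 1) (w : ℝ) : 0 < hoeffD p w := by
  unfold hoeffD
  rcases le_total (Real.exp w) 1 with h|h
  · nlinarith [Real.exp_pos w]
  · nlinarith

lemma hoeffD_hasDeriv (p w : ℝ) : HasDerivAt (hoeffD p) (p * Real.exp w) w := by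
  unfold hoeffD
  exact ((Real.hasDerivAt_exp w).const_mul p).const_add (1 - p)

lemma hoeffG_hasDeriv {p : ℝ} (hp0 : 0 ≤ p) (hp1 : p ≤ 1) (w : ℝ) :
    HasDerivAt (hoeffG p) (hoeffGd p w) w := by
  have h1 : HasDerivAt (fun w => Real.log (hoeffD p w)) (p * Real.exp w / hoeffD p w) w :=
    (hoeffD_hasDeriv p w).log (hoeffD_pos hp0 hp1 w).ne'
  have h2 : HasDerivAt (fun w : ℝ => p * w) p w := by
    simpa using (hasDerivAt_id w).const_mul p
  have h3 : HasDerivAt (fun w : ℝ => w ^ 2 / 8) (w / 4) w := by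
    have := (hasDerivAt_pow 2 w).div_const 8
    refine this.congr_deriv ?_
    ring
  exact (h1.sub h2).sub h3

lemma hoeffGd_hasDeriv {p : ℝ} (hp0 : 0 ≤ p) (hp1 : p ≤ 1) (w : ℝ) :
    HasDerivAt (hoeffGd p)
      ((p * Real.exp w * hoeffD p w - p * Real.exp w * (p * Real.exp w)) / (hoeffD p w) ^ 2
        - 1 / 4) w := by
  have h1 : HasDerivAt (fun w => p * Real.exp w / hoeffD p w)
      ((p * Real.exp w * hoeffD p w - p * Real.exp w * (p * Real.exp w)) / (hoeffD p w) ^ 2) w :=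
    ((Real.hasDerivAt_exp w).const_mul p).div (hoeffD_hasDeriv p w) (hoeffD_pos hp0 hp1 w).ne'
  have h3 : HasDerivAt (fun w : ℝ => p + w / 4) (1 / 4) w := by
    simpa using ((hasDerivAt_id w).div_const 4).const_add p
  have := h1.sub h3
  have heq : hoeffGd p = (fun w => p * Real.exp w / hoeffD p w) - fun w => p + w / 4 := by
    funext w
    unfold hoeffGd
    simp only [Pi.sub_apply]
    ring
  rw [heq]
  exact this

lemma hoeffGd_deriv_nonpos {p : ℝ} (hp0 : 0 ≤ p) (hp1 : p ≤ 1) (w : ℝ) :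
    (p * Real.exp w * hoeffD p w - p * Real.exp w * (p * Real.exp w)) / (hoeffD p w) ^ 2
      - 1 / 4 ≤ 0 := by
  have hd := hoeffD_pos hp0 hp1 w
  have h2 : p * Real.exp w ≤ hoeffD p w := by unfold hoeffD; linarith
  rw [sub_nonpos, div_le_iff₀ (pow_pos hd 2)]
  nlinarith [sq_nonneg (hoeffD p w - 2 * (p * Real.exp w))]

lemma hoeffGd_antitone {p : ℝ} (hp0 : 0 ≤ p) (hp1 : p ≤ 1) : Antitone (hoeffGd p) := by
  apply antitone_of_deriv_nonpos
  · exact fun w => (hoeffGd_hasDeriv hp0 hp1 w).differentiableAt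
  · intro w
    rw [(hoeffGd_hasDeriv hp0 hp1 w).deriv]
    exact hoeffGd_deriv_nonpos hp0 hp1 w

lemma hoeff_core {p : ℝ} (hp0 : 0 ≤ p) (hp1 : p ≤ 1) (v : ℝ) :
    1 - p + p * Real.exp v ≤ Real.exp (p * v + v ^ 2 / 8) := by
  have hgd0 : hoeffGd p 0 = 0 := by
    unfold hoeffGd hoeffD
    norm_num
  have hg0 : hoeffG p 0 = 0 := by
    unfold hoeffG hoeffD
    norm_num
  have hcont : Continuous (hoeffG p) :=
    (Differentiable.continuous (fun w => (hoeffG_hasDeriv hp0 hp1 w).differentiableAt))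
  have hgle : ∀ w, hoeffG p w ≤ 0 := by
    intro w
    have hanti := hoeffGd_antitone hp0 hp1
    rcases le_total 0 w with h|h
    · have hA : AntitoneOn (hoeffG p) (Set.Ici 0) := by
        apply antitoneOn_of_deriv_nonpos (convex_Ici 0) hcont.continuousOn
        · exact fun x _ => (hoeffG_hasDeriv hp0 hp1 x).differentiableAt.differentiableWithinAt
        · intro x hx
          rw [interior_Ici] at hx
          rw [(hoeffG_hasDeriv hp0 hp1 x).deriv]
          calc hoeffGd p x ≤ hoeffGd p 0 := hanti hx.le
            _ = 0 := hgd0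
      calc hoeffG p w ≤ hoeffG p 0 := hA Set.self_mem_Ici (Set.mem_Ici.mpr h) h
        _ = 0 := hg0
    · have hM : MonotoneOn (hoeffG p) (Set.Iic 0) := by
        apply monotoneOn_of_deriv_nonneg (convex_Iic 0) hcont.continuousOn
        · exact fun x _ => (hoeffG_hasDeriv hp0 hp1 x).differentiableAt.differentiableWithinAt
        · intro x hx
          rw [interior_Iic] at hx
          rw [(hoeffG_hasDeriv hp0 hp1 x).deriv]
          calc (0:ℝ) = hoeffGd p 0 := hgd0.symm
            _ ≤ hoeffGd p x := hanti hx.le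
      calc hoeffG p w ≤ hoeffG p 0 := hM (Set.mem_Iic.mpr h) Set.self_mem_Iic h
        _ = 0 := hg0
  have hlog : Real.log (hoeffD p v) ≤ p * v + v ^ 2 / 8 := by
    have := hgle v
    unfold hoeffG at this
    linarith
  calc 1 - p + p * Real.exp v = Real.exp (Real.log (hoeffD p v)) := by
        rw [Real.exp_log (hoeffD_pos hp0 hp1 v)]; rfl
    _ ≤ Real.exp (p * v + v ^ 2 / 8) := Real.exp_le_exp.mpr hlog

/-- Finite-population Hoeffding lemma: MGF bound for a uniform draw. -/
lemma finite_hoeffding {ι : Type*} (S : Finset ι) (x : ι → ℝ) (D : ℝ) (hD : 0 < D)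
    (hx : ∀ i ∈ S, 0 ≤ x i ∧ x i ≤ D) (u : ℝ) :
    ∑ i ∈ S, Real.exp (u * (x i - (∑ j ∈ S, x j) / S.card))
      ≤ S.card * Real.exp (u ^ 2 * D ^ 2 / 8) := by
  rcases S.eq_empty_or_nonempty with rfl | hne
  · simp
  have hM : (0:ℝ) < S.card := by exact_mod_cast hne.card_pos
  set M : ℝ := (S.card : ℝ) with hMdef
  set μ : ℝ := (∑ j ∈ S, x j) / M with hμdef
  have hsum_nonneg : 0 ≤ ∑ j ∈ S, x j := Finset.sum_nonneg fun i hi => (hx i hi).1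
  have hsum_le : ∑ j ∈ S, x j ≤ M * D := by
    calc ∑ j ∈ S, x j ≤ ∑ _j ∈ S, D := Finset.sum_le_sum fun i hi => (hx i hi).2
      _ = M * D := by rw [Finset.sum_const, nsmul_eq_mul]
  have hμ0 : 0 ≤ μ := div_nonneg hsum_nonneg hM.le
  have hμD : μ ≤ D := by
    rw [hμdef, div_le_iff₀ hM]
    linarith
  set p : ℝ := μ / D with hpdef
  have hp0 : 0 ≤ p := div_nonneg hμ0 hD.le
  have hp1 : p ≤ 1 := by rw [hpdef, div_le_one hD]; exact hμD
  set E : ℝ := Real.exp (u * D) with hEdef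
  have step1 : ∀ i ∈ S, Real.exp (u * x i) ≤ (1 - x i / D) + (x i / D) * E := by
    intro i hi
    have hθ0 : 0 ≤ x i / D := div_nonneg (hx i hi).1 hD.le
    have hθ1 : (1 : ℝ) - x i / D ≥ 0 := by
      rw [ge_iff_le, sub_nonneg, div_le_one hD]
      exact (hx i hi).2
    have := convexOn_exp.2 (Set.mem_univ (0:ℝ)) (Set.mem_univ (u * D)) hθ1 hθ0 (by ring)
    simp only [smul_eq_mul, mul_zero, zero_add, Real.exp_zero, mul_one] at this
    have harg : x i / D * (u * D) = u * x i := by field_simp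
    rw [harg] at this
    linarith
  have step2 : ∑ i ∈ S, Real.exp (u * x i) ≤ M * (1 - p + p * E) := by
    calc ∑ i ∈ S, Real.exp (u * x i) ≤ ∑ i ∈ S, ((1 - x i / D) + (x i / D) * E) :=
          Finset.sum_le_sum step1
      _ = M - (∑ j ∈ S, x j) / D + (∑ j ∈ S, x j) / D * E := by
          rw [Finset.sum_add_distrib, Finset.sum_sub_distrib, Finset.sum_const, nsmul_eq_mul,
            mul_one, ← Finset.sum_div, ← Finset.sum_mul, ← Finset.sum_div]
      _ = M * (1 - p + p * E) := by
          have : (∑ j ∈ S, x j) = M * μ := by rw [hμdef]; field_simp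
          rw [this, hpdef]
          field_simp
  have step3 : 1 - p + p * E ≤ Real.exp (u * μ + u ^ 2 * D ^ 2 / 8) := by
    have := hoeff_core hp0 hp1 (u * D)
    rw [← hEdef] at this
    calc 1 - p + p * E ≤ Real.exp (p * (u * D) + (u * D) ^ 2 / 8) := this
      _ = Real.exp (u * μ + u ^ 2 * D ^ 2 / 8) := by
          congr 1
          rw [hpdef]
          field_simp
  calc ∑ i ∈ S, Real.exp (u * (x i - μ))
      = Real.exp (-(u * μ)) * ∑ i ∈ S, Real.exp (u * x i) := by
        rw [Finset.mul_sum]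
        refine Finset.sum_congr rfl fun i hi => ?_
        rw [← Real.exp_add]
        congr 1
        ring
    _ ≤ Real.exp (-(u * μ)) * (M * Real.exp (u * μ + u ^ 2 * D ^ 2 / 8)) := by
        apply mul_le_mul_of_nonneg_left _ (Real.exp_pos _).le
        calc ∑ i ∈ S, Real.exp (u * x i) ≤ M * (1 - p + p * E) := step2
          _ ≤ M * Real.exp (u * μ + u ^ 2 * D ^ 2 / 8) :=
              mul_le_mul_of_nonneg_left step3 hM.le
    _ = M * Real.exp (u ^ 2 * D ^ 2 / 8) := by
        rw [← mul_assoc, mul_comm (Real.exp _) M, mul_assoc, ← Real.exp_add]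
        congr 2
        ring

/-- Each `(r+1)`-subset `I` of `S` arises exactly `r+1` times as `insert i I'` with
`i ∈ S`, `I' ∈ (S.erase i).powersetCard r`. -/
lemma subset_count_identity {ι : Type*} [DecidableEq ι] (S : Finset ι) (r : ℕ)
    (f : Finset ι → ℝ) :
    ∑ i ∈ S, ∑ I' ∈ (S.erase i).powersetCard r, f (insert i I')
      = (r + 1 : ℝ) * ∑ I ∈ S.powersetCard (r + 1), f I := by
  have swap : ∑ I ∈ S.powersetCard (r + 1), ∑ i ∈ I, f I
      = ∑ i ∈ S, ∑ I ∈ (S.powersetCard (r + 1)).filter (fun I => i ∈ I), f I := by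
    apply Finset.sum_comm'
    intro I i
    simp only [Finset.mem_filter, Finset.mem_powersetCard]
    constructor
    · rintro ⟨⟨hIS, hcard⟩, hiI⟩
      exact ⟨⟨⟨hIS, hcard⟩, hiI⟩, hIS hiI⟩
    · rintro ⟨⟨⟨hIS, hcard⟩, hiI⟩, _⟩
      exact ⟨⟨hIS, hcard⟩, hiI⟩
  have inner_eq : ∀ i ∈ S,
      ∑ I ∈ (S.powersetCard (r + 1)).filter (fun I => i ∈ I), f I
        = ∑ I' ∈ (S.erase i).powersetCard r, f (insert i I') := by
    intro i hi
    apply Finset.sum_nbij' (fun I => I.erase i) (fun I' => insert i I')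
    · intro I hI
      simp only [Finset.mem_filter, Finset.mem_powersetCard] at hI
      obtain ⟨⟨hIS, hcard⟩, hiI⟩ := hI
      simp only [Finset.mem_powersetCard]
      constructor
      · exact Finset.erase_subset_erase i hIS
      · rw [Finset.card_erase_of_mem hiI, hcard]
        omega
    · intro I' hI'
      simp only [Finset.mem_powersetCard] at hI'
      obtain ⟨hI'S, hcard⟩ := hI'
      have hiI' : i ∉ I' := fun h => (Finset.mem_erase.mp (hI'S h)).1 rfl
      simp only [Finset.mem_filter, Finset.mem_powersetCard]
      refine ⟨⟨?_, ?_⟩, Finset.mem_insert_self i I'⟩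
      · intro j hj
        rcases Finset.mem_insert.mp hj with rfl | hj
        · exact hi
        · exact Finset.mem_of_mem_erase (hI'S hj)
      · rw [Finset.card_insert_of_notMem hiI', hcard]
    · intro I hI
      simp only [Finset.mem_filter] at hI
      exact Finset.insert_erase hI.2
    · intro I' hI'
      simp only [Finset.mem_powersetCard] at hI'
      have hiI' : i ∉ I' := fun h => (Finset.mem_erase.mp (hI'.1 h)).1 rfl
      exact Finset.erase_insert hiI'
    · intro I hI
      simp only [Finset.mem_filter] at hI
      rw [Finset.insert_erase hI.2]
  have card_eq : ∀ I ∈ S.powersetCard (r + 1), ∑ i ∈ I, f I = (r + 1 : ℝ) * f I := by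
    intro I hI
    rw [Finset.sum_const, Finset.mem_powersetCard] at *
    rw [hI.2, nsmul_eq_mul]
    push_cast
    ring
  calc ∑ i ∈ S, ∑ I' ∈ (S.erase i).powersetCard r, f (insert i I')
      = ∑ i ∈ S, ∑ I ∈ (S.powersetCard (r + 1)).filter (fun I => i ∈ I), f I :=
        (Finset.sum_congr rfl fun i hi => (inner_eq i hi).symm)
    _ = ∑ I ∈ S.powersetCard (r + 1), ∑ i ∈ I, f I := swap.symm
    _ = ∑ I ∈ S.powersetCard (r + 1), (r + 1 : ℝ) * f I := Finset.sum_congr rfl card_eq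
    _ = (r + 1 : ℝ) * ∑ I ∈ S.powersetCard (r + 1), f I := by rw [Finset.mul_sum]

/-- Key MGF bound for sampling without replacement. -/
lemma mgf_without_replacement {ι : Type*} [DecidableEq ι] (D : ℝ) (hD : 0 < D) :
    ∀ (r : ℕ) (S : Finset ι) (x : ι → ℝ), r ≤ S.card → (∀ i ∈ S, 0 ≤ x i ∧ x i ≤ D) →
    ∀ s : ℝ,
    ∑ I ∈ S.powersetCard r, Real.exp (s * (∑ i ∈ I, x i - r * ((∑ j ∈ S, x j) / S.card)))
      ≤ (S.card.choose r : ℝ) * Real.exp (s ^ 2 * r * D ^ 2 / 8) := by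
  intro r
  induction r with
  | zero =>
    intro S x _ _ s
    simp
  | succ r ih =>
    intro S x hrS hx s
    have hM0 : 0 < S.card := lt_of_lt_of_le (Nat.succ_pos r) hrS
    have hMR : (0:ℝ) < (S.card : ℝ) := by exact_mod_cast hM0
    set μ : ℝ := (∑ j ∈ S, x j) / S.card with hμdef
    have hμsum : (S.card : ℝ) * μ = ∑ j ∈ S, x j := by
      rw [hμdef]; field_simp
    rcases eq_or_lt_of_le hrS with heq | hlt
    · -- r + 1 = S.card : the only subset is S itself, deviation is 0
      rw [heq, Finset.powersetCard_self, Finset.sum_singleton, Nat.choose_self]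
      have hz : ∑ i ∈ S, x i - (S.card : ℝ) * μ = 0 := by rw [hμsum]; ring
      rw [hz, mul_zero, Real.exp_zero, Nat.cast_one, one_mul, ← Real.exp_zero]
      apply Real.exp_le_exp.mpr
      positivity
    · -- r + 1 < S.card : peel off one sampled element
      push_cast
      set M : ℝ := (S.card : ℝ) with hMdef
      have hM1' : (0:ℝ) < M - 1 := by
        have : (2:ℝ) ≤ M := by rw [hMdef]; exact_mod_cast (by omega : 2 ≤ S.card)
        linarith
      set c : ℝ := (M - 1 - r) / (M - 1) with hcdef
      have hc0 : 0 ≤ c := by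
        apply div_nonneg _ hM1'.le
        have : (r:ℝ) + 1 + 1 ≤ M := by
          rw [hMdef]
          exact_mod_cast (by omega : r + 1 + 1 ≤ S.card)
        linarith
      have hc1 : c ≤ 1 := by
        rw [hcdef, div_le_one hM1']
        have : (0:ℝ) ≤ (r:ℝ) := Nat.cast_nonneg r
        linarith
      have per_elem : ∀ i ∈ S,
          ∑ I' ∈ (S.erase i).powersetCard r,
            Real.exp (s * (∑ j ∈ insert i I', x j - ((r:ℝ) + 1) * μ))
          ≤ ((S.card - 1).choose r : ℝ) * Real.exp (s ^ 2 * r * D ^ 2 / 8)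
              * Real.exp (s * c * (x i - μ)) := by
        intro i hi
        set μ' : ℝ := (∑ j ∈ S.erase i, x j) / ((S.erase i).card) with hμ'def
        have hcarde : (S.erase i).card = S.card - 1 := Finset.card_erase_of_mem hi
        have hcardeR : ((S.erase i).card : ℝ) = M - 1 := by
          rw [hcarde, hMdef]
          have h1 : 1 ≤ S.card := hM0
          push_cast [h1]
          ring
        have hsum_erase : ∑ j ∈ S.erase i, x j = (∑ j ∈ S, x j) - x i :=
          Finset.sum_erase_eq_sub hi
        have hco : x i - ((r:ℝ) + 1) * μ + r * μ' = c * (x i - μ) := by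
          rw [hμ'def, hcardeR, hsum_erase, ← hμsum, hcdef]
          field_simp
          ring
        have hstep : ∀ I' ∈ (S.erase i).powersetCard r,
            Real.exp (s * (∑ j ∈ insert i I', x j - ((r:ℝ) + 1) * μ))
              = Real.exp (s * c * (x i - μ)) * Real.exp (s * (∑ j ∈ I', x j - r * μ')) := by
          intro I' hI'
          have hiI' : i ∉ I' := by
            intro h
            have := (Finset.mem_powersetCard.mp hI').1 h
            exact (Finset.mem_erase.mp this).1 rfl
          rw [Finset.sum_insert hiI', ← Real.exp_add]
          congr 1
          have : x i + ∑ j ∈ I', x j - ((r:ℝ) + 1) * μ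
              = c * (x i - μ) + (∑ j ∈ I', x j - r * μ') := by linarith [hco]
          rw [this]
          ring
        rw [Finset.sum_congr rfl hstep, ← Finset.mul_sum]
        have hih := ih (S.erase i) x (by rw [hcarde]; omega)
          (fun j hj => hx j (Finset.mem_of_mem_erase hj)) s
        rw [← hμ'def, hcarde] at hih
        calc Real.exp (s * c * (x i - μ)) * ∑ I' ∈ (S.erase i).powersetCard r,
              Real.exp (s * (∑ j ∈ I', x j - ↑r * μ'))
            ≤ Real.exp (s * c * (x i - μ))
                * (((S.card - 1).choose r : ℝ) * Real.exp (s ^ 2 * r * D ^ 2 / 8)) :=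
              mul_le_mul_of_nonneg_left hih (Real.exp_pos _).le
          _ = ((S.card - 1).choose r : ℝ) * Real.exp (s ^ 2 * r * D ^ 2 / 8)
                * Real.exp (s * c * (x i - μ)) := by ring
      -- assemble
      have key := subset_count_identity S r
        (fun I => Real.exp (s * (∑ j ∈ I, x j - ((r:ℝ) + 1) * μ)))
      have hc2 : c ^ 2 ≤ 1 := by nlinarith
      have hfh := finite_hoeffding S x D hD hx (s * c)
      rw [← hMdef, ← hμdef] at hfh
      have hnat : S.card * (S.card - 1).choose r = (r + 1) * S.card.choose (r + 1) := by
        have h1 := Nat.add_one_mul_choose_eq (S.card - 1) r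
        have h2 : S.card - 1 + 1 = S.card := by omega
        simp only [Nat.succ_eq_add_one, h2] at h1
        rw [h1]
        ring
      have hnatR : M * ((S.card - 1).choose r : ℝ)
          = ((r:ℝ) + 1) * (S.card.choose (r + 1) : ℝ) := by
        rw [hMdef]
        exact_mod_cast hnat
      have main : ((r:ℝ) + 1) * ∑ I ∈ S.powersetCard (r + 1),
            Real.exp (s * (∑ j ∈ I, x j - ((r:ℝ) + 1) * μ))
          ≤ ((r:ℝ) + 1) * ((S.card.choose (r + 1) : ℝ)
              * Real.exp (s ^ 2 * ((r:ℝ) + 1) * D ^ 2 / 8)) := by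
        calc ((r:ℝ) + 1) * ∑ I ∈ S.powersetCard (r + 1),
              Real.exp (s * (∑ j ∈ I, x j - ((r:ℝ) + 1) * μ))
            = ∑ i ∈ S, ∑ I' ∈ (S.erase i).powersetCard r,
                Real.exp (s * (∑ j ∈ insert i I', x j - ((r:ℝ) + 1) * μ)) := key.symm
          _ ≤ ∑ i ∈ S, ((S.card - 1).choose r : ℝ) * Real.exp (s ^ 2 * r * D ^ 2 / 8)
                * Real.exp (s * c * (x i - μ)) := Finset.sum_le_sum per_elem
          _ = ((S.card - 1).choose r : ℝ) * Real.exp (s ^ 2 * r * D ^ 2 / 8)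
                * ∑ i ∈ S, Real.exp (s * c * (x i - μ)) := by rw [← Finset.mul_sum]
          _ ≤ ((S.card - 1).choose r : ℝ) * Real.exp (s ^ 2 * r * D ^ 2 / 8)
                * (M * Real.exp ((s * c) ^ 2 * D ^ 2 / 8)) := by
              apply mul_le_mul_of_nonneg_left hfh
              positivity
          _ ≤ ((S.card - 1).choose r : ℝ) * Real.exp (s ^ 2 * r * D ^ 2 / 8)
                * (M * Real.exp (s ^ 2 * D ^ 2 / 8)) := by
              have hMnn : (0:ℝ) ≤ M := by linarith
              have harg : (s * c) ^ 2 * D ^ 2 / 8 ≤ s ^ 2 * D ^ 2 / 8 := by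
                have hsc : (s * c) ^ 2 ≤ s ^ 2 := by nlinarith [sq_nonneg s]
                nlinarith [sq_nonneg D]
              have := Real.exp_le_exp.mpr harg
              have h2 : M * Real.exp ((s * c) ^ 2 * D ^ 2 / 8)
                  ≤ M * Real.exp (s ^ 2 * D ^ 2 / 8) :=
                mul_le_mul_of_nonneg_left this hMnn
              apply mul_le_mul_of_nonneg_left h2
              positivity
          _ = M * ((S.card - 1).choose r : ℝ)
                * Real.exp (s ^ 2 * ((r:ℝ) + 1) * D ^ 2 / 8) := by
              rw [mul_assoc, mul_comm (Real.exp _) (M * Real.exp _), mul_assoc,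
                ← Real.exp_add]
              ring_nf
          _ = ((r:ℝ) + 1) * ((S.card.choose (r + 1) : ℝ)
                * Real.exp (s ^ 2 * ((r:ℝ) + 1) * D ^ 2 / 8)) := by
              rw [hnatR]; ring
      have hpos : (0:ℝ) < (r:ℝ) + 1 := by positivity
      exact le_of_mul_le_mul_left main hpos

lemma chernoff_upper {ι : Type*} [DecidableEq ι] (S : Finset ι) (x : ι → ℝ) (D : ℝ)
    (hD : 0 < D) (hx : ∀ i ∈ S, 0 ≤ x i ∧ x i ≤ D) (n : ℕ) (hnS : n ≤ S.card)
    (t : ℝ) (ht : 0 ≤ t) :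
    (((S.powersetCard n).filter
        (fun I => (n:ℝ) * t ≤ ∑ i ∈ I, x i - n * ((∑ j ∈ S, x j) / S.card))).card : ℝ)
      ≤ (S.card.choose n : ℝ) * Real.exp (-2 * n * t ^ 2 / D ^ 2) := by
  set μ := (∑ j ∈ S, x j) / (S.card : ℝ) with hμdef
  set s := 4 * t / D ^ 2 with hs
  have hs0 : 0 ≤ s := by positivity
  calc (((S.powersetCard n).filter
          (fun I => (n:ℝ) * t ≤ ∑ i ∈ I, x i - n * μ)).card : ℝ)
      = ∑ _I ∈ (S.powersetCard n).filter
          (fun I => (n:ℝ) * t ≤ ∑ i ∈ I, x i - n * μ), (1:ℝ) := by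
        rw [Finset.sum_const, nsmul_eq_mul, mul_one]
    _ ≤ ∑ I ∈ (S.powersetCard n).filter
          (fun I => (n:ℝ) * t ≤ ∑ i ∈ I, x i - n * μ),
          Real.exp (s * (∑ i ∈ I, x i - n * μ)) * Real.exp (-(s * (n * t))) := by
        apply Finset.sum_le_sum
        intro I hI
        have hev := (Finset.mem_filter.mp hI).2
        rw [← Real.exp_add]
        rw [show (1:ℝ) = Real.exp 0 by rw [Real.exp_zero]]
        apply Real.exp_le_exp.mpr
        have := mul_nonneg hs0 (sub_nonneg.mpr hev)
        nlinarith
    _ ≤ ∑ I ∈ S.powersetCard n,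
          Real.exp (s * (∑ i ∈ I, x i - n * μ)) * Real.exp (-(s * (n * t))) := by
        apply Finset.sum_le_sum_of_subset_of_nonneg (Finset.filter_subset _ _)
        intro I _ _
        positivity
    _ = (∑ I ∈ S.powersetCard n, Real.exp (s * (∑ i ∈ I, x i - n * μ)))
          * Real.exp (-(s * (n * t))) := by rw [← Finset.sum_mul]
    _ ≤ ((S.card.choose n : ℝ) * Real.exp (s ^ 2 * n * D ^ 2 / 8))
          * Real.exp (-(s * (n * t))) := by
        apply mul_le_mul_of_nonneg_right _ (Real.exp_pos _).le
        exact mgf_without_replacement D hD n S x hnS hx s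
    _ = (S.card.choose n : ℝ) * Real.exp (-2 * n * t ^ 2 / D ^ 2) := by
        rw [mul_assoc, ← Real.exp_add]
        congr 2
        rw [hs]
        field_simp
        ring

lemma chernoff_lower {ι : Type*} [DecidableEq ι] (S : Finset ι) (x : ι → ℝ) (D : ℝ)
    (hD : 0 < D) (hx : ∀ i ∈ S, 0 ≤ x i ∧ x i ≤ D) (n : ℕ) (hn : 0 < n) (hnS : n ≤ S.card)
    (t : ℝ) (ht : 0 ≤ t) :
    (((S.powersetCard n).filter
        (fun I => ∑ i ∈ I, x i - n * ((∑ j ∈ S, x j) / S.card) ≤ -((n:ℝ) * t))).card : ℝ)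
      ≤ (S.card.choose n : ℝ) * Real.exp (-2 * n * t ^ 2 / D ^ 2) := by
  have hScard : 0 < S.card := lt_of_lt_of_le hn hnS
  have hSR : (0:ℝ) < (S.card : ℝ) := by exact_mod_cast hScard
  have hy : ∀ i ∈ S, 0 ≤ D - x i ∧ D - x i ≤ D := by
    intro i hi
    constructor
    · linarith [(hx i hi).2]
    · linarith [(hx i hi).1]
  have key := chernoff_upper S (fun i => D - x i) D hD hy n hnS t ht
  have hfilter_eq : (S.powersetCard n).filter
        (fun I => (n:ℝ) * t ≤ ∑ i ∈ I, (D - x i) - n * ((∑ j ∈ S, (D - x j)) / S.card))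
      = (S.powersetCard n).filter
        (fun I => ∑ i ∈ I, x i - n * ((∑ j ∈ S, x j) / S.card) ≤ -((n:ℝ) * t)) := by
    apply Finset.filter_congr
    intro I hI
    have hIcard : I.card = n := (Finset.mem_powersetCard.mp hI).2
    have h1 : ∑ i ∈ I, (D - x i) = n * D - ∑ i ∈ I, x i := by
      rw [Finset.sum_sub_distrib, Finset.sum_const, nsmul_eq_mul, hIcard]
    have h2 : (∑ j ∈ S, (D - x j)) / (S.card : ℝ)
        = D - (∑ j ∈ S, x j) / (S.card : ℝ) := by
      rw [Finset.sum_sub_distrib, Finset.sum_const, nsmul_eq_mul]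
      field_simp
    rw [h1, h2]
    constructor <;> intro h <;> simp only [eq_iff_iff, iff_true] at * <;> nlinarith
  rw [hfilter_eq] at key
  exact key

lemma chernoff_two_sided {ι : Type*} [DecidableEq ι] (S : Finset ι) (x : ι → ℝ) (D : ℝ)
    (hD : 0 < D) (hx : ∀ i ∈ S, 0 ≤ x i ∧ x i ≤ D) (n : ℕ) (hn : 0 < n) (hnS : n ≤ S.card)
    (t : ℝ) (ht : 0 ≤ t) :
    (((S.powersetCard n).filter
        (fun I => ¬(|(∑ j ∈ S, x j) / S.card - (1 / (n:ℝ)) * ∑ i ∈ I, x i| ≤ t))).card : ℝ)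
      ≤ 2 * (S.card.choose n : ℝ) * Real.exp (-2 * n * t ^ 2 / D ^ 2) := by
  have hnR : (0:ℝ) < (n : ℝ) := by exact_mod_cast hn
  set μ := (∑ j ∈ S, x j) / (S.card : ℝ) with hμdef
  have hsub : (S.powersetCard n).filter
        (fun I => ¬(|μ - (1 / (n:ℝ)) * ∑ i ∈ I, x i| ≤ t))
      ⊆ ((S.powersetCard n).filter
          (fun I => (n:ℝ) * t ≤ ∑ i ∈ I, x i - n * μ))
        ∪ ((S.powersetCard n).filter
          (fun I => ∑ i ∈ I, x i - n * μ ≤ -((n:ℝ) * t))) := by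
    intro I hI
    rw [Finset.mem_filter] at hI
    obtain ⟨hIP, hev⟩ := hI
    rw [Finset.mem_union, Finset.mem_filter, Finset.mem_filter]
    rw [not_le] at hev
    have habs : (n:ℝ) * t < |∑ i ∈ I, x i - n * μ| := by
      have : |∑ i ∈ I, x i - n * μ| = (n:ℝ) * |μ - (1 / (n:ℝ)) * ∑ i ∈ I, x i| := by
        rw [← abs_of_pos hnR, ← abs_mul, abs_sub_comm]
        congr 1
        field_simp
        rw [abs_of_pos hnR]
        ring
      rw [this]
      exact (mul_lt_mul_iff_right₀ hnR).mpr hev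
    rcases lt_abs.mp habs with h | h
    · exact Or.inl ⟨hIP, h.le⟩
    · right
      exact ⟨hIP, by linarith⟩
  calc (((S.powersetCard n).filter
          (fun I => ¬(|μ - (1 / (n:ℝ)) * ∑ i ∈ I, x i| ≤ t))).card : ℝ)
      ≤ ((((S.powersetCard n).filter
            (fun I => (n:ℝ) * t ≤ ∑ i ∈ I, x i - n * μ))
          ∪ ((S.powersetCard n).filter
            (fun I => ∑ i ∈ I, x i - n * μ ≤ -((n:ℝ) * t)))).card : ℝ) := by
        exact_mod_cast Finset.card_le_card hsub
    _ ≤ (((S.powersetCard n).filter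
            (fun I => (n:ℝ) * t ≤ ∑ i ∈ I, x i - n * μ)).card : ℝ)
        + (((S.powersetCard n).filter
            (fun I => ∑ i ∈ I, x i - n * μ ≤ -((n:ℝ) * t))).card : ℝ) := by
        exact_mod_cast Finset.card_union_le _ _
    _ ≤ (S.card.choose n : ℝ) * Real.exp (-2 * n * t ^ 2 / D ^ 2)
        + (S.card.choose n : ℝ) * Real.exp (-2 * n * t ^ 2 / D ^ 2) := by
        apply add_le_add
        · exact chernoff_upper S x D hD hx n hnS t ht
        · exact chernoff_lower S x D hD hx n hn hnS t ht
    _ = 2 * (S.card.choose n : ℝ) * Real.exp (-2 * n * t ^ 2 / D ^ 2) := by ring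

lemma bad_count_bound {N n : ℕ} (hn : 0 < n) (hnN : n ≤ N) (x : Fin N → ℝ) (D : ℝ)
    (hD : 0 < D) (hx : ∀ i, 0 ≤ x i ∧ x i ≤ D) (tt : ℝ) (htt : 0 ≤ tt) :
    (((Finset.powersetCard n (Finset.univ : Finset (Fin N))).filter
        (fun I => ¬(|(1 / (N : ℝ)) * ∑ i, x i - (1 / (n : ℝ)) * ∑ i ∈ I, x i| ≤ tt))).card : ℝ)
      ≤ 2 * (N.choose n : ℝ) * Real.exp (-2 * n * tt ^ 2 / D ^ 2) := by
  have hcard : (Finset.univ : Finset (Fin N)).card = N := by simp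
  have key := chernoff_two_sided (Finset.univ : Finset (Fin N)) x D hD (fun i _ => hx i) n hn
    (by rw [hcard]; exact hnN) tt htt
  rw [hcard] at key
  have hfe : (Finset.powersetCard n (Finset.univ : Finset (Fin N))).filter
        (fun I => ¬(|(∑ j ∈ Finset.univ, x j) / (N : ℝ)
          - (1 / (n:ℝ)) * ∑ i ∈ I, x i| ≤ tt))
      = (Finset.powersetCard n (Finset.univ : Finset (Fin N))).filter
        (fun I => ¬(|(1 / (N : ℝ)) * ∑ i, x i - (1 / (n : ℝ)) * ∑ i ∈ I, x i| ≤ tt)) := by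
    apply Finset.filter_congr
    intro I _
    rw [show (∑ i, x i) / (N:ℝ) = (1 / (N:ℝ)) * ∑ i, x i from by ring]
  rw [hfe] at key
  exact key


lemma union_bound_five {kk : Type*} (s : Finset kk)
    (q p1 p2 p3 p4 p5 : kk → Prop) [DecidablePred q] [DecidablePred p1] [DecidablePred p2]
    [DecidablePred p3] [DecidablePred p4] [DecidablePred p5]
    (hq : ∀ I, q I ↔ (p1 I ∧ p2 I ∧ p3 I ∧ p4 I ∧ p5 I)) (b : ℝ)
    (hb1 : ((s.filter (fun I => ¬ p1 I)).card : ℝ) ≤ b)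
    (hb2 : ((s.filter (fun I => ¬ p2 I)).card : ℝ) ≤ b)
    (hb3 : ((s.filter (fun I => ¬ p3 I)).card : ℝ) ≤ b)
    (hb4 : ((s.filter (fun I => ¬ p4 I)).card : ℝ) ≤ b)
    (hb5 : ((s.filter (fun I => ¬ p5 I)).card : ℝ) ≤ b) :
    (s.card : ℝ) - 5 * b ≤ ((s.filter q).card : ℝ) := by
  have hsub : s ⊆ (s.filter q) ∪ ((s.filter (fun I => ¬ p1 I)) ∪ (s.filter (fun I => ¬ p2 I))
      ∪ (s.filter (fun I => ¬ p3 I)) ∪ (s.filter (fun I => ¬ p4 I))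
      ∪ (s.filter (fun I => ¬ p5 I))) := by
    intro I hI
    simp only [Finset.mem_union, Finset.mem_filter, hq]
    tauto
  have hc0 := Finset.card_le_card hsub
  have u0 := Finset.card_union_le (s.filter q)
    ((s.filter (fun I => ¬ p1 I)) ∪ (s.filter (fun I => ¬ p2 I))
      ∪ (s.filter (fun I => ¬ p3 I)) ∪ (s.filter (fun I => ¬ p4 I))
      ∪ (s.filter (fun I => ¬ p5 I)))
  have u1 := Finset.card_union_le
    ((s.filter (fun I => ¬ p1 I)) ∪ (s.filter (fun I => ¬ p2 I))
      ∪ (s.filter (fun I => ¬ p3 I)) ∪ (s.filter (fun I => ¬ p4 I)))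
    (s.filter (fun I => ¬ p5 I))
  have u2 := Finset.card_union_le
    ((s.filter (fun I => ¬ p1 I)) ∪ (s.filter (fun I => ¬ p2 I))
      ∪ (s.filter (fun I => ¬ p3 I))) (s.filter (fun I => ¬ p4 I))
  have u3 := Finset.card_union_le
    ((s.filter (fun I => ¬ p1 I)) ∪ (s.filter (fun I => ¬ p2 I)))
    (s.filter (fun I => ¬ p3 I))
  have u4 := Finset.card_union_le (s.filter (fun I => ¬ p1 I)) (s.filter (fun I => ¬ p2 I))
  have hnat : s.card ≤ (s.filter q).card + ((s.filter (fun I => ¬ p1 I)).card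
      + (s.filter (fun I => ¬ p2 I)).card + (s.filter (fun I => ¬ p3 I)).card
      + (s.filter (fun I => ¬ p4 I)).card + (s.filter (fun I => ¬ p5 I)).card) := by omega
  have hR : (s.card : ℝ) ≤ ((s.filter q).card : ℝ) + (((s.filter (fun I => ¬ p1 I)).card : ℝ)
      + ((s.filter (fun I => ¬ p2 I)).card : ℝ) + ((s.filter (fun I => ¬ p3 I)).card : ℝ)
      + ((s.filter (fun I => ¬ p4 I)).card : ℝ) + ((s.filter (fun I => ¬ p5 I)).card : ℝ)) := by
    exact_mod_cast hnat
  linarith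

/-- Simultaneous Hoeffding bounds for the five parameters of Pearson's correlation:
if `(A₁,B₁), …, (A_N,B_N)` are pairs with entries in `[0, C]` (`C > 0`), `n` pairs
are sampled uniformly at random without replacement, `0 < α < 1`,
`t = √(ln(10/α)·C²/(2n))` and `t' = √(ln(10/α)·C⁴/(2n))`, then with probability at
least `1 − α` all five bounds hold: `|μ_A − μ_a| ≤ t`, `|μ_B − μ_b| ≤ t`,
`|ν_A − ν_a| ≤ t'`, `|ν_B − ν_b| ≤ t'`, and `|ν_{A,B} − ν_{a,b}| ≤ t'`. -/
theorem five_parameter_union_bound (N n : ℕ) (hn : 0 < n) (hnN : n ≤ N)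
    (A B : Fin N → ℝ) (C : ℝ) (hC : 0 < C)
    (hA : ∀ i, 0 ≤ A i ∧ A i ≤ C) (hB : ∀ i, 0 ≤ B i ∧ B i ≤ C)
    (α : ℝ) (hα : 0 < α) (hα1 : α < 1) :
    let t := Real.sqrt (Real.log (10 / α) * C ^ 2 / (2 * n))
    let t' := Real.sqrt (Real.log (10 / α) * C ^ 4 / (2 * n))
    (((Finset.powersetCard n (Finset.univ : Finset (Fin N))).filter
        (fun I =>
          |(1 / (N : ℝ)) * ∑ i, A i - (1 / (n : ℝ)) * ∑ i ∈ I, A i| ≤ t ∧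
          |(1 / (N : ℝ)) * ∑ i, B i - (1 / (n : ℝ)) * ∑ i ∈ I, B i| ≤ t ∧
          |(1 / (N : ℝ)) * ∑ i, (A i) ^ 2 - (1 / (n : ℝ)) * ∑ i ∈ I, (A i) ^ 2| ≤ t' ∧
          |(1 / (N : ℝ)) * ∑ i, (B i) ^ 2 - (1 / (n : ℝ)) * ∑ i ∈ I, (B i) ^ 2| ≤ t' ∧
          |(1 / (N : ℝ)) * ∑ i, A i * B i
              - (1 / (n : ℝ)) * ∑ i ∈ I, A i * B i| ≤ t')).card : ℝ)
      / ((Finset.powersetCard n (Finset.univ : Finset (Fin N))).card : ℝ)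
    ≥ 1 - α := by
  intro t t'
  have hnR : (0:ℝ) < (n:ℝ) := by exact_mod_cast hn
  have hlog : 0 ≤ Real.log (10 / α) := by
    apply Real.log_nonneg
    rw [le_div_iff₀ hα]
    linarith
  have ht0 : 0 ≤ t := Real.sqrt_nonneg _
  have ht'0 : 0 ≤ t' := Real.sqrt_nonneg _
  have ht2 : t ^ 2 = Real.log (10 / α) * C ^ 2 / (2 * n) := by
    apply Real.sq_sqrt
    positivity
  have ht'2 : t' ^ 2 = Real.log (10 / α) * C ^ 4 / (2 * n) := by
    apply Real.sq_sqrt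
    positivity
  have hexp10 : Real.exp (-Real.log (10 / α)) = α / 10 := by
    rw [Real.exp_neg, Real.exp_log (by positivity : (0:ℝ) < 10 / α)]
    rw [inv_div]
  have hexpt : Real.exp (-2 * n * t ^ 2 / C ^ 2) = α / 10 := by
    rw [← hexp10]
    congr 1
    rw [ht2]
    field_simp
  have hexpt' : Real.exp (-2 * n * t' ^ 2 / (C ^ 2) ^ 2) = α / 10 := by
    rw [← hexp10]
    congr 1
    rw [ht'2]
    field_simp
  have hC2 : (0:ℝ) < C ^ 2 := by positivity
  have hA2 : ∀ i, 0 ≤ A i ^ 2 ∧ A i ^ 2 ≤ C ^ 2 := fun i =>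
    ⟨sq_nonneg _, by nlinarith [(hA i).1, (hA i).2]⟩
  have hB2 : ∀ i, 0 ≤ B i ^ 2 ∧ B i ^ 2 ≤ C ^ 2 := fun i =>
    ⟨sq_nonneg _, by nlinarith [(hB i).1, (hB i).2]⟩
  have hAB : ∀ i, 0 ≤ A i * B i ∧ A i * B i ≤ C ^ 2 := fun i =>
    ⟨mul_nonneg (hA i).1 (hB i).1, by nlinarith [(hA i).1, (hA i).2, (hB i).1, (hB i).2]⟩
  set T : ℝ := (N.choose n : ℝ) with hTdef
  have hTpos : (0:ℝ) < T := by
    rw [hTdef]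
    exact_mod_cast Nat.choose_pos hnN
  have bad1 := bad_count_bound hn hnN A C hC hA t ht0
  have bad2 := bad_count_bound hn hnN B C hC hB t ht0
  have bad3 := bad_count_bound hn hnN (fun i => A i ^ 2) (C ^ 2) hC2 hA2 t' ht'0
  have bad4 := bad_count_bound hn hnN (fun i => B i ^ 2) (C ^ 2) hC2 hB2 t' ht'0
  have bad5 := bad_count_bound hn hnN (fun i => A i * B i) (C ^ 2) hC2 hAB t' ht'0
  rw [hexpt] at bad1 bad2
  rw [hexpt'] at bad3 bad4 bad5
  rw [← hTdef] at bad1 bad2 bad3 bad4 bad5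
  have hb1 : (((Finset.powersetCard n (Finset.univ : Finset (Fin N))).filter
      (fun I => ¬(|(1 / (N : ℝ)) * ∑ i, A i - (1 / (n : ℝ)) * ∑ i ∈ I, A i| ≤ t))).card : ℝ)
      ≤ T * α / 5 := by
    refine bad1.trans (le_of_eq ?_)
    ring
  have hb2 : (((Finset.powersetCard n (Finset.univ : Finset (Fin N))).filter
      (fun I => ¬(|(1 / (N : ℝ)) * ∑ i, B i - (1 / (n : ℝ)) * ∑ i ∈ I, B i| ≤ t))).card : ℝ)
      ≤ T * α / 5 := by
    refine bad2.trans (le_of_eq ?_)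
    ring
  have hb3 : (((Finset.powersetCard n (Finset.univ : Finset (Fin N))).filter
      (fun I => ¬(|(1 / (N : ℝ)) * ∑ i, (A i) ^ 2 - (1 / (n : ℝ)) * ∑ i ∈ I, (A i) ^ 2| ≤ t'))).card : ℝ)
      ≤ T * α / 5 := by
    refine le_trans ?_ (bad3.trans (le_of_eq (by ring)))
    exact le_of_eq rfl
  have hb4 : (((Finset.powersetCard n (Finset.univ : Finset (Fin N))).filter
      (fun I => ¬(|(1 / (N : ℝ)) * ∑ i, (B i) ^ 2 - (1 / (n : ℝ)) * ∑ i ∈ I, (B i) ^ 2| ≤ t'))).card : ℝ)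
      ≤ T * α / 5 := by
    refine le_trans ?_ (bad4.trans (le_of_eq (by ring)))
    exact le_of_eq rfl
  have hb5 : (((Finset.powersetCard n (Finset.univ : Finset (Fin N))).filter
      (fun I => ¬(|(1 / (N : ℝ)) * ∑ i, A i * B i - (1 / (n : ℝ)) * ∑ i ∈ I, A i * B i| ≤ t'))).card : ℝ)
      ≤ T * α / 5 := by
    refine le_trans ?_ (bad5.trans (le_of_eq (by ring)))
    exact le_of_eq rfl
  have hmain := union_bound_five (Finset.powersetCard n (Finset.univ : Finset (Fin N)))
    (fun I =>
      |(1 / (N : ℝ)) * ∑ i, A i - (1 / (n : ℝ)) * ∑ i ∈ I, A i| ≤ t ∧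
      |(1 / (N : ℝ)) * ∑ i, B i - (1 / (n : ℝ)) * ∑ i ∈ I, B i| ≤ t ∧
      |(1 / (N : ℝ)) * ∑ i, (A i) ^ 2 - (1 / (n : ℝ)) * ∑ i ∈ I, (A i) ^ 2| ≤ t' ∧
      |(1 / (N : ℝ)) * ∑ i, (B i) ^ 2 - (1 / (n : ℝ)) * ∑ i ∈ I, (B i) ^ 2| ≤ t' ∧
      |(1 / (N : ℝ)) * ∑ i, A i * B i - (1 / (n : ℝ)) * ∑ i ∈ I, A i * B i| ≤ t')
    (fun I => |(1 / (N : ℝ)) * ∑ i, A i - (1 / (n : ℝ)) * ∑ i ∈ I, A i| ≤ t)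
    (fun I => |(1 / (N : ℝ)) * ∑ i, B i - (1 / (n : ℝ)) * ∑ i ∈ I, B i| ≤ t)
    (fun I => |(1 / (N : ℝ)) * ∑ i, (A i) ^ 2 - (1 / (n : ℝ)) * ∑ i ∈ I, (A i) ^ 2| ≤ t')
    (fun I => |(1 / (N : ℝ)) * ∑ i, (B i) ^ 2 - (1 / (n : ℝ)) * ∑ i ∈ I, (B i) ^ 2| ≤ t')
    (fun I => |(1 / (N : ℝ)) * ∑ i, A i * B i - (1 / (n : ℝ)) * ∑ i ∈ I, A i * B i| ≤ t')
    (fun I => Iff.rfl) (T * α / 5) hb1 hb2 hb3 hb4 hb5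
  have hPcard : (((Finset.powersetCard n (Finset.univ : Finset (Fin N))).card : ℝ)) = T := by
    rw [Finset.card_powersetCard, hTdef]
    simp
  rw [ge_iff_le, le_div_iff₀ (by rw [hPcard]; exact hTpos)]
  rw [hPcard] at hmain ⊢
  linarith
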